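/- If a column C (a strictly increasing sequence over the ordered alphabet 1 < ... < n < -n < ... < -1) satisfies the one column condition (for every value i with both i and -i in C, the number of entries x with x ≤ i or x ≥ -i is at most i), then C has at most n entries. -/

import Mathlib

/-- The alphabet `[±n] = {1 < 2 < ⋯ < n < n̄ < ⋯ < 1̄}` is encoded as `{1, …, 2n} ⊆ ℕ`
with the usual order, the barred letter `ī` being encoded as `2n+1-i`. -/
def bar (n x : ℕ) : ℕ := 2 * n + 1 - x

/-- A column over `[±n]`: a strictly increasing list with entries in `{1, …, 2n}`. -/
def IsColumn (n : ℕ) (C : List ℕ) : Prop :=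
  C.Chain' (· < ·) ∧ ∀ x ∈ C, 1 ≤ x ∧ x ≤ 2 * n

/-- The one column condition (1CC): for every unbarred `i` with both `i` and `ī` in `C`,
the number of entries `x` with `x ≤ i` or `x ≥ ī` is at most `i`. -/
def OCC (n : ℕ) (C : List ℕ) : Prop :=
  ∀ i, 1 ≤ i → i ≤ n → i ∈ C → bar n i ∈ C →
    C.countP (fun x => decide (x ≤ i ∨ bar n i ≤ x)) ≤ i

private lemma nodup_len_le (l : List ℕ) (a b : ℕ) (hnd : l.Nodup)
    (hmem : ∀ x ∈ l, x ∈ Finset.Icc a b) : l.length ≤ b + 1 - a := by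
  have h1 : l.toFinset ⊆ Finset.Icc a b := fun x hx => hmem x (List.mem_toFinset.1 hx)
  have := Finset.card_le_card h1
  rw [List.toFinset_card_of_nodup hnd, Nat.card_Icc] at this
  exact this

/-- a column satisfying the one column condition has at most `n` entries. -/
theorem one_column_condition_length_le (n : ℕ) (C : List ℕ)
    (hC : IsColumn n C) (h1cc : OCC n C) : C.length ≤ n := by
  classical
  obtain ⟨hch, hbd⟩ := hC
  have hnd : C.Nodup := (List.isChain_iff_pairwise.1 hch).imp ne_of_lt
  set f : ℕ → ℕ := fun x => min x (2 * n + 1 - x) with hf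
  -- pair detection
  have hpair : ∀ x ∈ C, ∀ y ∈ C, f x = f y → x ≠ y →
      ∃ j, 1 ≤ j ∧ j ≤ n ∧ j ∈ C ∧ bar n j ∈ C ∧ (j = x ∨ j = y) ∧ f x = j := by
    intro x hx y hy hfxy hne
    obtain ⟨hx1, hx2⟩ := hbd x hx
    obtain ⟨hy1, hy2⟩ := hbd y hy
    rcases Nat.lt_or_ge x (n + 1) with hxn | hxn
    · refine ⟨x, hx1, by omega, hx, ?_, Or.inl rfl, by simp [hf]; omega⟩
      have : y = 2 * n + 1 - x := by simp [hf] at hfxy; omega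
      simpa [bar, ← this]
    · refine ⟨y, hy1, ?_, hy, ?_, Or.inr rfl, ?_⟩
      · simp [hf] at hfxy; omega
      · have : x = 2 * n + 1 - y := by simp [hf] at hfxy; omega
        have hyn : y ≤ n := by simp [hf] at hfxy; omega
        simpa [bar, ← this]
      · simp [hf] at hfxy ⊢; omega
  by_cases h : ∃ i, 1 ≤ i ∧ i ≤ n ∧ i ∈ C ∧ bar n i ∈ C
  · -- take maximal such i
    set S : Finset ℕ := (Finset.Icc 1 n).filter (fun i => i ∈ C ∧ bar n i ∈ C) with hS
    have hSne : S.Nonempty := by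
      obtain ⟨i, h1, h2, h3, h4⟩ := h
      exact ⟨i, by simp [hS, Finset.mem_filter, Finset.mem_Icc, h1, h2, h3, h4]⟩
    set i := S.max' hSne with hi
    have hiS : i ∈ S := S.max'_mem hSne
    simp only [hS, Finset.mem_filter, Finset.mem_Icc] at hiS
    obtain ⟨⟨hi1, hi2⟩, hiC, hbiC⟩ := hiS
    have hmax : ∀ j ∈ S, j ≤ i := fun j hj => S.le_max' j hj
    have hocc := h1cc i hi1 hi2 hiC hbiC
    set p : ℕ → Bool := fun x => decide (x ≤ i ∨ bar n i ≤ x) with hp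
    -- bound middle part
    set M : List ℕ := C.filter (fun x => !p x) with hM
    have hsplit : C.length = C.countP p + M.length := by
      rw [hM, ← List.countP_eq_length_filter]
      simpa using List.length_eq_countP_add_countP (l := C) p
    have hMnd : M.Nodup := hnd.sublist List.filter_sublist
    have hMmemC : ∀ x ∈ M, x ∈ C := fun x hx => (List.mem_filter.1 hx).1
    have hMrange : ∀ x ∈ M, i < x ∧ x < bar n i := by
      intro x hx
      have := (List.mem_filter.1 hx).2
      simp [hp] at this
      omega
    have hMinj : ∀ x ∈ M, ∀ y ∈ M, f x = f y → x = y := by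
      intro x hx y hy hfxy
      by_contra hne
      obtain ⟨j, hj1, hj2, hjC, hbjC, hjeq, hjf⟩ :=
        hpair x (hMmemC x hx) y (hMmemC y hy) hfxy hne
      have hjS : j ∈ S := by
        simp [hS, Finset.mem_filter, Finset.mem_Icc, hj1, hj2, hjC, hbjC]
      have hji := hmax j hjS
      rcases hjeq with rfl | rfl
      · exact absurd (hMrange j hx).1 (by omega)
      · exact absurd (hMrange j hy).1 (by omega)
    have hMmap : (M.map f).Nodup := List.Nodup.map_on hMinj hMnd
    have hMmapmem : ∀ z ∈ M.map f, z ∈ Finset.Icc (i + 1) n := by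
      intro z hz
      obtain ⟨x, hx, rfl⟩ := List.mem_map.1 hz
      obtain ⟨hlo, hhi⟩ := hMrange x hx
      obtain ⟨hx1, hx2⟩ := hbd x (hMmemC x hx)
      simp [Finset.mem_Icc, hf, bar] at *
      omega
    have hMlen : M.length ≤ n - i := by
      have := nodup_len_le (M.map f) (i + 1) n hMmap hMmapmem
      simpa using this
    omega
  · -- no pair: f injective on C
    push_neg at h
    have hinj : ∀ x ∈ C, ∀ y ∈ C, f x = f y → x = y := by
      intro x hx y hy hfxy
      by_contra hne
      obtain ⟨j, hj1, hj2, hjC, hbjC, _, _⟩ := hpair x hx y hy hfxy hne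
      exact h j hj1 hj2 hjC hbjC
    have hmap : (C.map f).Nodup := List.Nodup.map_on hinj hnd
    have hmem : ∀ z ∈ C.map f, z ∈ Finset.Icc 1 n := by
      intro z hz
      obtain ⟨x, hx, rfl⟩ := List.mem_map.1 hz
      obtain ⟨hx1, hx2⟩ := hbd x hx
      simp [Finset.mem_Icc, hf]; omega
    have := nodup_len_le (C.map f) 1 n hmap hmem
    simpa using this
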